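/- For all n ≥ 0 and all k with 0 ≤ k ≤ n, the list C(n,k) has exactly binomial(n,k) entries and contains every bit-string of length n having exactly k ones exactly once; in particular C(n,k) has no repeated entries. -/

import Mathlib

def C : ℕ → ℕ → List (List Bool)
  | n, 0 => [List.replicate n false]
  | 0, _ + 1 => []
  | n + 1, k + 1 =>
      if n = k then [List.replicate (n + 1) true]
      else
        ((C n (k + 1)).map fun w => w ++ [false]) ++
          ((C n k).reverse.map fun w => w ++ [true])

theorem C_spec : ∀ n k : ℕ, k ≤ n →
    (C n k).length = n.choose k ∧ (C n k).Nodup ∧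
    ∀ w : List Bool, w ∈ C n k ↔ w.length = n ∧ w.count true = k := by
  intro n
  induction n with
  | zero =>
    intro k hk
    interval_cases k
    simp [C, List.length_eq_zero_iff]
  | succ n ih =>
    intro k hk
    match k with
    | 0 =>
      refine ⟨by simp [C], by simp [C], ?_⟩
      intro w
      simp only [C, List.mem_singleton]
      constructor
      · rintro rfl; simp [List.count_replicate]
      · rintro ⟨hl, hc⟩
        rw [List.count_eq_zero] at hc
        exact List.eq_replicate_iff.mpr ⟨hl, fun b hb => by
          cases b
          · rfl
          · exact absurd hb hc⟩
    | k + 1 =>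
      by_cases hnk : n = k
      · subst hnk
        have hC : C (n + 1) (n + 1) = [List.replicate (n + 1) true] := by simp [C]
        refine ⟨by simp [hC], by simp [hC], ?_⟩
        intro w
        rw [hC, List.mem_singleton]
        constructor
        · rintro rfl; simp [List.count_replicate]
        · rintro ⟨hl, hc⟩
          have : w.count true = w.length := by omega
          rw [List.count_eq_length] at this
          exact List.eq_replicate_iff.mpr ⟨hl, fun b hb => (this b hb).symm⟩
      · have hk1 : k + 1 ≤ n := by omega
        have hk0 : k ≤ n := by omega
        obtain ⟨l1, nd1, m1⟩ := ih (k + 1) hk1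
        obtain ⟨l2, nd2, m2⟩ := ih k hk0
        have hC : C (n + 1) (k + 1) =
            ((C n (k + 1)).map fun w => w ++ [false]) ++
              ((C n k).reverse.map fun w => w ++ [true]) := by
          simp [C, hnk]
        refine ⟨?_, ?_, ?_⟩
        · rw [hC]
          simp [l1, l2, Nat.choose_succ_succ (n := n) (k := k)]
          omega
        · rw [hC]
          have hinj : ∀ b : Bool, Function.Injective (fun w : List Bool => w ++ [b]) :=
            fun b x y h => by simpa using h
          refine List.Nodup.append (nd1.map (hinj false)) ((List.nodup_reverse.mpr nd2).map (hinj true)) ?_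
          intro a ha hb
          simp only [List.mem_map] at ha hb
          obtain ⟨v, _, rfl⟩ := ha
          obtain ⟨v', _, heq⟩ := hb
          have := List.append_inj' heq rfl
          simp at this
        · intro w
          rw [hC]
          simp only [List.mem_append, List.mem_map, List.mem_reverse, m1, m2]
          constructor
          · rintro (⟨v, ⟨hl, hc⟩, rfl⟩ | ⟨v, ⟨hl, hc⟩, rfl⟩) <;>
              simp [List.count_append, hl, hc]
          · rintro ⟨hl, hc⟩
            have hne : w ≠ [] := by rintro rfl; simp at hl
            obtain ⟨v, b, rfl⟩ : ∃ v b, w = v ++ [b] :=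
              ⟨w.dropLast, w.getLast hne, (List.dropLast_append_getLast hne).symm⟩
            simp only [List.length_append, List.length_singleton] at hl
            cases b
            · left
              refine ⟨v, ⟨by omega, ?_⟩, rfl⟩
              simpa using hc
            · right
              refine ⟨v, ⟨by omega, ?_⟩, rfl⟩
              simp [List.count_append] at hc
              omega

theorem count_eq (l : List (List Bool)) (w : List Bool) :
    @List.count (List Bool) List.instBEq w l = @List.count (List Bool) instBEqOfDecidableEq w l := by
  induction l with
  | nil => rfl
  | cons a l ih => simp [List.count_cons, ih, beq_iff_eq]

/-- For all `n ≥ 0` and `0 ≤ k ≤ n`, the list `C(n,k)` has exactly `binomial(n,k)`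
entries, contains every bit-string of length `n` with exactly `k` ones exactly once,
and has no repeated entries. -/
theorem stmt5 (n k : ℕ) (hk : k ≤ n) :
    (C n k).length = n.choose k ∧
    (∀ w : List Bool, w.length = n → w.count true = k → (C n k).count w = 1) ∧
    (C n k).Nodup := by
  obtain ⟨hl, nd, hm⟩ := C_spec n k hk
  refine ⟨hl, fun w h1 h2 => ?_, nd⟩
  have h := List.count_eq_one_of_mem nd ((hm w).mpr ⟨h1, h2⟩)
  exact h
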